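/- Consider the periodic neural network du_i(t)/dt = −d_i(t) u_i(t) + Σ_{j=1}^n a_{ij}(t) g_j(u_j(t)) + Σ_{j=1}^n b_{ij}(t) f_j(u_j(t − τ_{ij}(t))) + I_i(t) with ω-periodic continuous coefficients, bounded delays 0 < τ_{ij}(t) ≤ τ_max, Lipschitz activations with constants G_i, F_i, and bounds 0 ≤ d_i(t) − Σ_{j=1}^n G_j |a_{ij}(t)| ≤ M_a, Σ_{j=1}^n F_j |b_{ij}(t)| ≤ M_b. If d_i(t) − Σ_{j=1}^n |a_{ij}(t)| G_j − Σ_{j=1}^n |b_{ij}(t)| F_j ≥ 0 for all t and all i, and there exists η > 0 such that the set S̄_η = {t ∈ [0,ω] : d_i(t) − Σ_{j=1}^n [G_j |a_{ij}(t)| + F_j |b_{ij}(t)|] ≥ η for all i} has positive Lebesgue measure, then the network has an ω-periodic solution which is exponentially asymptotically stable. -/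

import Mathlib

open MeasureTheory Set Real Filter

lemma pnc_lip_nonneg {g : ℝ → ℝ} {G : ℝ} (h : ∀ x h', |g (x + h') - g x| ≤ G * |h'|) :
    0 ≤ G := by
  have := h 0 1
  have h0 := abs_nonneg (g (0 + 1) - g 0)
  simpa using le_trans h0 this

lemma pnc_lip_bound {g : ℝ → ℝ} {G : ℝ} (h : ∀ x h', |g (x + h') - g x| ≤ G * |h'|)
    (p q : ℝ) : |g p - g q| ≤ G * |p - q| := by
  simpa using h q (p - q)

lemma pnc_lip_cont {g : ℝ → ℝ} {G : ℝ} (h : ∀ x h', |g (x + h') - g x| ≤ G * |h'|) :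
    Continuous g := by
  have hG := pnc_lip_nonneg h
  have : LipschitzWith ⟨G, hG⟩ g := by
    apply LipschitzWith.of_dist_le_mul
    intro a b
    rw [Real.dist_eq, Real.dist_eq]; exact pnc_lip_bound h a b
  exact this.continuous

lemma pnc_hasDerivAt_primitive {f : ℝ → ℝ} (hf : Continuous f) (t : ℝ) :
    HasDerivAt (fun x => ∫ s in (0:ℝ)..x, f s) (f t) t :=
  intervalIntegral.integral_hasDerivAt_right (hf.intervalIntegrable _ _)
    (hf.stronglyMeasurableAtFilter _ _) hf.continuousAt

lemma pnc_continuous_primitive {f : ℝ → ℝ} (hf : Continuous f) :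
    Continuous (fun x => ∫ s in (0:ℝ)..x, f s) :=
  continuous_iff_continuousAt.2 fun t => (pnc_hasDerivAt_primitive hf t).continuousAt

lemma pnc_periodic_bound {V : Type*} [NormedAddCommGroup V] {F : ℝ → V} {ω : ℝ} (hω : 0 < ω)
    (hc : Continuous F) (hp : ∀ t, F (t + ω) = F t) : ∃ C, 0 ≤ C ∧ ∀ t, ‖F t‖ ≤ C := by
  obtain ⟨C, hC⟩ := (isCompact_Icc (a := (0:ℝ)) (b := ω)).exists_bound_of_continuousOn
    hc.continuousOn
  refine ⟨max C 0, le_max_right _ _, fun t => ?_⟩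
  have hper : Function.Periodic F ω := hp
  obtain ⟨y, hy, hFy⟩ := hper.exists_mem_Ico₀ hω t
  rw [hFy]
  exact le_trans (hC y (Ico_subset_Icc_self hy)) (le_max_left _ _)

lemma pnc_int_abs_le {φ ψ : ℝ → ℝ} {p q : ℝ} (hpq : p ≤ q) (hφ : Continuous φ)
    (hψ : Continuous ψ) (hb : ∀ s ∈ Icc p q, |φ s| ≤ ψ s) :
    |∫ s in p..q, φ s| ≤ ∫ s in p..q, ψ s := by
  calc |∫ s in p..q, φ s| ≤ ∫ s in p..q, |φ s| :=
        intervalIntegral.abs_integral_le_integral_abs hpq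
    _ ≤ ∫ s in p..q, ψ s := by
        apply intervalIntegral.integral_mono_on hpq (hφ.abs.intervalIntegrable _ _)
          (hψ.intervalIntegrable _ _)
        intro s hs; exact hb s hs

lemma pnc_abs_sub_le_integral {w W ψ : ℝ → ℝ} {p q : ℝ} (hpq : p ≤ q)
    (hW : ∀ s ∈ Icc p q, HasDerivAt w (W s) s) (hWc : Continuous W)
    (hψ : Continuous ψ) (hbd : ∀ s ∈ Icc p q, |W s| ≤ ψ s) :
    |w q - w p| ≤ ∫ s in p..q, ψ s := by
  have h1 : ∫ s in p..q, W s = w q - w p := by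
    apply intervalIntegral.integral_eq_sub_of_hasDerivAt
    · intro s hs
      exact hW s (by rwa [Set.uIcc_of_le hpq] at hs)
    · exact hWc.intervalIntegrable _ _
  rw [← h1]
  exact pnc_int_abs_le hpq hWc hψ hbd

set_option maxHeartbeats 1000000

/-- shift of the integral of a periodic function -/
lemma pnc_E_diff {dd : ℝ → ℝ} (hdc : Continuous dd) {ω : ℝ}
    (hdp : ∀ t, dd (t + ω) = dd t) (t : ℝ) :
    (∫ s in (0:ℝ)..t, dd s) - (∫ s in (0:ℝ)..(t-ω), dd s) = ∫ s in (0:ℝ)..ω, dd s := by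
  have h1 : (∫ s in (0:ℝ)..(t-ω), dd s) + ∫ s in (t-ω)..t, dd s = ∫ s in (0:ℝ)..t, dd s :=
    intervalIntegral.integral_add_adjacent_intervals (hdc.intervalIntegrable _ _)
      (hdc.intervalIntegrable _ _)
  have hper : Function.Periodic dd ω := hdp
  have h2 := hper.intervalIntegral_add_eq (t - ω) 0
  rw [sub_add_cancel, zero_add] at h2
  linarith

/-- FTC for the exponential kernel -/
lemma pnc_kernel_integral {dd : ℝ → ℝ} (hdc : Continuous dd) (p t : ℝ) :
    (∫ s in p..t, Real.exp ((∫ r in (0:ℝ)..s, dd r) - (∫ r in (0:ℝ)..t, dd r)) * dd s)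
      = 1 - Real.exp ((∫ r in (0:ℝ)..p, dd r) - (∫ r in (0:ℝ)..t, dd r)) := by
  have h : ∀ s ∈ Set.uIcc p t,
      HasDerivAt (fun x => Real.exp ((∫ r in (0:ℝ)..x, dd r) - (∫ r in (0:ℝ)..t, dd r)))
        (Real.exp ((∫ r in (0:ℝ)..s, dd r) - (∫ r in (0:ℝ)..t, dd r)) * dd s) s := by
    intro s _
    have h1 := ((pnc_hasDerivAt_primitive hdc s).sub_const (∫ r in (0:ℝ)..t, dd r)).exp
    simpa [mul_comm] using h1
  have hInt : IntervalIntegrable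
      (fun s => Real.exp ((∫ r in (0:ℝ)..s, dd r) - (∫ r in (0:ℝ)..t, dd r)) * dd s)
      volume p t := by
    apply Continuous.intervalIntegrable
    exact (((pnc_continuous_primitive hdc).sub continuous_const).rexp).mul hdc
  have := intervalIntegral.integral_eq_sub_of_hasDerivAt h hInt
  rw [this]
  simp

lemma pnc_zsmul_mem {S : Set ℝ} {ω : ℝ} (hS : ∀ x : ℝ, x + ω ∈ S ↔ x ∈ S) (m : ℤ) (x : ℝ) :
    x + m * ω ∈ S ↔ x ∈ S := by
  induction m using Int.induction_on with
  | zero => simp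
  | succ k ih =>
    have h1 : x + ((k : ℤ) + 1 : ℤ) * ω = (x + (k : ℤ) * ω) + ω := by push_cast; ring
    rw [h1, hS]
    exact ih
  | pred k ih =>
    have h1 : x + (-(k : ℤ) - 1 : ℤ) * ω + ω = x + (-(k : ℤ) : ℤ) * ω := by push_cast; ring
    rw [← ih, ← hS (x + (-(k : ℤ) - 1 : ℤ) * ω), h1]

lemma pnc_shift_meas {S : Set ℝ} {ω : ℝ} (hS : ∀ x : ℝ, x + ω ∈ S ↔ x ∈ S)
    (hSm : MeasurableSet S) (m : ℤ) (p q : ℝ) :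
    volume (S ∩ Ioc (p + m * ω) (q + m * ω)) = volume (S ∩ Ioc p q) := by
  have h1 : (fun x : ℝ => x + m * ω) ⁻¹' (S ∩ Ioc (p + m * ω) (q + m * ω))
      = S ∩ Ioc p q := by
    rw [Set.preimage_inter]
    congr 1
    · ext x; exact pnc_zsmul_mem hS m x
    · rw [Set.preimage_add_const_Ioc]; congr 1 <;> ring
  calc volume (S ∩ Ioc (p + m * ω) (q + m * ω))
      = volume ((fun x : ℝ => x + m * ω) ⁻¹' (S ∩ Ioc (p + m * ω) (q + m * ω))) := by
        rw [measure_preimage_add_right]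
    _ = volume (S ∩ Ioc p q) := by rw [h1]

lemma pnc_periodic_meas_window {S : Set ℝ} {ω : ℝ} (hω : 0 < ω)
    (hS : ∀ x : ℝ, x + ω ∈ S ↔ x ∈ S) (hSm : MeasurableSet S) (c : ℝ) :
    volume (S ∩ Ioc c (c + ω)) = volume (S ∩ Ioc 0 ω) := by
  set k : ℤ := ⌈c / ω⌉ with hk
  have hk1 : c ≤ k * ω := by
    rw [← div_le_iff₀ hω] at *
    · exact Int.le_ceil _
  have hk2 : (k : ℝ) * ω ≤ c + ω := by
    have := Int.ceil_lt_add_one (c / ω)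
    have h2 : (k : ℝ) < c / ω + 1 := this
    calc (k : ℝ) * ω ≤ (c / ω + 1) * ω := by nlinarith
      _ = c + ω := by field_simp
  set c' : ℝ := c - (k - 1) * ω with hc'
  have hc'0 : 0 ≤ c' := by push_cast [hc']; nlinarith
  have hc'ω : c' ≤ ω := by push_cast [hc']; nlinarith
  have hsplit : Ioc c (c + ω) = Ioc c (k * ω) ∪ Ioc ((k : ℝ) * ω) (c + ω) :=
    (Set.Ioc_union_Ioc_eq_Ioc hk1 hk2).symm
  have hsplit2 : Ioc (0:ℝ) ω = Ioc 0 c' ∪ Ioc c' ω :=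
    (Set.Ioc_union_Ioc_eq_Ioc hc'0 hc'ω).symm
  have hmeas : ∀ p q : ℝ, MeasurableSet (S ∩ Ioc p q) := fun p q =>
    hSm.inter measurableSet_Ioc
  have hdisj : Disjoint (S ∩ Ioc c ((k : ℝ) * ω)) (S ∩ Ioc ((k : ℝ) * ω) (c + ω)) := by
    apply Set.disjoint_of_subset inter_subset_right inter_subset_right
    exact Set.Ioc_disjoint_Ioc_of_le le_rfl
  have hdisj2 : Disjoint (S ∩ Ioc (0:ℝ) c') (S ∩ Ioc c' ω) := by
    apply Set.disjoint_of_subset inter_subset_right inter_subset_right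
    exact Set.Ioc_disjoint_Ioc_of_le le_rfl
  have e1 : volume (S ∩ Ioc c (c + ω))
      = volume (S ∩ Ioc c ((k:ℝ) * ω)) + volume (S ∩ Ioc ((k:ℝ) * ω) (c + ω)) := by
    rw [hsplit, Set.inter_union_distrib_left]
    exact measure_union hdisj (hmeas _ _)
  have e2 : volume (S ∩ Ioc (0:ℝ) ω)
      = volume (S ∩ Ioc (0:ℝ) c') + volume (S ∩ Ioc c' ω) := by
    rw [hsplit2, Set.inter_union_distrib_left]
    exact measure_union hdisj2 (hmeas _ _)
  have s1 : volume (S ∩ Ioc c ((k:ℝ) * ω)) = volume (S ∩ Ioc c' ω) := by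
    have := pnc_shift_meas hS hSm (k - 1) c' ω
    have harg1 : c' + ((k : ℤ) - 1 : ℤ) * ω = c := by push_cast [hc']; ring
    have harg2 : ω + ((k : ℤ) - 1 : ℤ) * ω = (k : ℝ) * ω := by push_cast; ring
    rw [harg1, harg2] at this
    exact this
  have s2 : volume (S ∩ Ioc ((k:ℝ) * ω) (c + ω)) = volume (S ∩ Ioc (0:ℝ) c') := by
    have := pnc_shift_meas hS hSm k 0 c'
    have harg1 : (0:ℝ) + (k : ℤ) * ω = (k:ℝ) * ω := by push_cast; ring
    have harg2 : c' + (k : ℤ) * ω = c + ω := by push_cast [hc']; ring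
    rw [harg1, harg2] at this
    exact this
  rw [e1, e2, s1, s2, add_comm]

lemma pnc_integral_ge_meas {φ : ℝ → ℝ} (hφ : Continuous φ) (hφ0 : ∀ s, 0 ≤ φ s)
    {S : Set ℝ} (hSm : MeasurableSet S) {p q κ : ℝ} (hpq : p ≤ q)
    (hge : ∀ s ∈ S ∩ Ioc p q, κ ≤ φ s) :
    κ * (volume (S ∩ Ioc p q)).toReal ≤ ∫ s in p..q, φ s := by
  have hint : IntegrableOn φ (Ioc p q) volume :=
    hφ.integrableOn_Ioc
  have h1 : ∫ s in p..q, φ s = ∫ s in Ioc p q, φ s := by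
    rw [intervalIntegral.integral_of_le hpq]
  have h2 : ∫ s in S ∩ Ioc p q, φ s ≤ ∫ s in Ioc p q, φ s := by
    apply setIntegral_mono_set hint
    · exact Filter.Eventually.of_forall hφ0
    · exact HasSubset.Subset.eventuallyLE inter_subset_right
  have h3 : κ * (volume (S ∩ Ioc p q)).toReal ≤ ∫ s in S ∩ Ioc p q, φ s := by
    apply setIntegral_ge_of_const_le_real (hSm.inter measurableSet_Ioc)
    · exact ne_top_of_le_ne_top (by simp) (measure_mono inter_subset_right)
    · exact hge
    · exact hint.mono_set inter_subset_right
  rw [h1]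
  exact le_trans h3 h2

noncomputable def pncE (dd : ℝ → ℝ) (t : ℝ) : ℝ := ∫ s in (0:ℝ)..t, dd s

noncomputable def pncH {n : ℕ} (a b τd : Fin n → Fin n → ℝ → ℝ) (I g f : Fin n → ℝ → ℝ)
    (u : ℝ → Fin n → ℝ) (i : Fin n) (s : ℝ) : ℝ :=
  (∑ j, a i j s * g j (u s j)) + (∑ j, b i j s * f j (u (s - τd i j s) j)) + I i s

noncomputable def pncT {n : ℕ} (ω : ℝ) (d : Fin n → ℝ → ℝ) (a b τd : Fin n → Fin n → ℝ → ℝ)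
    (I g f : Fin n → ℝ → ℝ) (u : ℝ → Fin n → ℝ) (t : ℝ) (i : Fin n) : ℝ :=
  (1 - Real.exp (-(pncE (d i) ω)))⁻¹ *
    (Real.exp (-(pncE (d i) t)) *
      ((∫ s in (0:ℝ)..t, Real.exp (pncE (d i) s) * pncH a b τd I g f u i s) -
       (∫ s in (0:ℝ)..(t-ω), Real.exp (pncE (d i) s) * pncH a b τd I g f u i s)))

section core

variable {n : ℕ} {ω : ℝ} {d : Fin n → ℝ → ℝ} {a b τd : Fin n → Fin n → ℝ → ℝ}
  {I g f : Fin n → ℝ → ℝ} {u v : ℝ → Fin n → ℝ} {G F : Fin n → ℝ}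

lemma pncH_cont (hacont : ∀ i j, Continuous (a i j)) (hbcont : ∀ i j, Continuous (b i j))
    (hτcont : ∀ i j, Continuous (τd i j)) (hIcont : ∀ i, Continuous (I i))
    (hgc : ∀ i, Continuous (g i)) (hfc : ∀ i, Continuous (f i))
    (hu : Continuous u) (i : Fin n) : Continuous (pncH a b τd I g f u i) := by
  unfold pncH
  apply Continuous.add
  apply Continuous.add
  · apply continuous_finset_sum
    intro j _
    exact (hacont i j).mul ((hgc j).comp ((continuous_apply j).comp hu))
  · apply continuous_finset_sum
    intro j _
    exact (hbcont i j).mul ((hfc j).comp ((continuous_apply j).comp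
      (hu.comp (continuous_id.sub (hτcont i j)))))
  · exact hIcont i

lemma pncH_per (haper : ∀ i j (t : ℝ), a i j (t + ω) = a i j t)
    (hbper : ∀ i j (t : ℝ), b i j (t + ω) = b i j t)
    (hτper : ∀ i j (t : ℝ), τd i j (t + ω) = τd i j t)
    (hIper : ∀ i (t : ℝ), I i (t + ω) = I i t)
    (hu : ∀ t, u (t + ω) = u t) (i : Fin n) (s : ℝ) :
    pncH a b τd I g f u i (s + ω) = pncH a b τd I g f u i s := by
  unfold pncH
  rw [hIper]
  congr 1
  congr 1
  · apply Finset.sum_congr rfl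
    intro j _
    rw [haper, hu]
  · apply Finset.sum_congr rfl
    intro j _
    rw [hbper, hτper]
    have : s + ω - τd i j s = (s - τd i j s) + ω := by ring
    rw [this, hu]

lemma pncH_diff_bound
    (hg : ∀ i (x h : ℝ), |g i (x + h) - g i x| ≤ G i * |h|)
    (hf : ∀ i (x h : ℝ), |f i (x + h) - f i x| ≤ F i * |h|)
    {D : ℝ} (i : Fin n) (s : ℝ)
    (hbD1 : ∀ j : Fin n, |u s j - v s j| ≤ D)
    (hbD2 : ∀ j : Fin n, |u (s - τd i j s) j - v (s - τd i j s) j| ≤ D) :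
    |pncH a b τd I g f u i s - pncH a b τd I g f v i s| ≤
      (∑ j, (G j * |a i j s| + F j * |b i j s|)) * D := by
  have hG0 : ∀ j, 0 ≤ G j := fun j => pnc_lip_nonneg (hg j)
  have hF0 : ∀ j, 0 ≤ F j := fun j => pnc_lip_nonneg (hf j)
  have key : pncH a b τd I g f u i s - pncH a b τd I g f v i s =
      (∑ j, a i j s * (g j (u s j) - g j (v s j))) +
      (∑ j, b i j s * (f j (u (s - τd i j s) j) - f j (v (s - τd i j s) j))) := by
    unfold pncH
    simp only [mul_sub, Finset.sum_sub_distrib]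
    ring
  rw [key]
  have h1 : |∑ j, a i j s * (g j (u s j) - g j (v s j))| ≤ ∑ j, G j * |a i j s| * D := by
    refine le_trans (Finset.abs_sum_le_sum_abs _ _) (Finset.sum_le_sum fun j _ => ?_)
    rw [abs_mul]
    calc |a i j s| * |g j (u s j) - g j (v s j)| ≤ |a i j s| * (G j * D) := by
          apply mul_le_mul_of_nonneg_left _ (abs_nonneg _)
          exact le_trans (pnc_lip_bound (hg j) _ _) (mul_le_mul_of_nonneg_left (hbD1 j) (hG0 j))
      _ = G j * |a i j s| * D := by ring
  have h2 : |∑ j, b i j s * (f j (u (s - τd i j s) j) - f j (v (s - τd i j s) j))| ≤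
      ∑ j, F j * |b i j s| * D := by
    refine le_trans (Finset.abs_sum_le_sum_abs _ _) (Finset.sum_le_sum fun j _ => ?_)
    rw [abs_mul]
    calc |b i j s| * |f j (u (s - τd i j s) j) - f j (v (s - τd i j s) j)|
        ≤ |b i j s| * (F j * D) := by
          apply mul_le_mul_of_nonneg_left _ (abs_nonneg _)
          exact le_trans (pnc_lip_bound (hf j) _ _)
            (mul_le_mul_of_nonneg_left (hbD2 j) (hF0 j))
      _ = F j * |b i j s| * D := by ring
  calc |_ + _| ≤ _ + _ := abs_add_le _ _
    _ ≤ (∑ j, G j * |a i j s| * D) + (∑ j, F j * |b i j s| * D) := add_le_add h1 h2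
    _ = (∑ j, (G j * |a i j s| + F j * |b i j s|)) * D := by
        rw [Finset.sum_mul, ← Finset.sum_add_distrib]
        exact Finset.sum_congr rfl fun j _ => by ring

end core
section core2

variable {n : ℕ} {ω : ℝ} {d : Fin n → ℝ → ℝ} {a b τd : Fin n → Fin n → ℝ → ℝ}
  {I g f : Fin n → ℝ → ℝ} {u : ℝ → Fin n → ℝ}

lemma pncT_repr {i : Fin n} (hdc : Continuous (d i))
    (hH : Continuous (pncH a b τd I g f u i)) (t : ℝ) :
    pncT ω d a b τd I g f u t i = (1 - Real.exp (-(pncE (d i) ω)))⁻¹ *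
      ∫ s in (t-ω)..t, Real.exp (pncE (d i) s - pncE (d i) t) * pncH a b τd I g f u i s := by
  have hc : Continuous fun s => Real.exp (pncE (d i) s) * pncH a b τd I g f u i s := by
    unfold pncE
    exact ((pnc_continuous_primitive hdc).rexp).mul hH
  have hsub : (∫ s in (0:ℝ)..t, Real.exp (pncE (d i) s) * pncH a b τd I g f u i s) -
      (∫ s in (0:ℝ)..(t-ω), Real.exp (pncE (d i) s) * pncH a b τd I g f u i s)
      = ∫ s in (t-ω)..t, Real.exp (pncE (d i) s) * pncH a b τd I g f u i s :=
    intervalIntegral.integral_interval_sub_left (hc.intervalIntegrable _ _)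
      (hc.intervalIntegrable _ _)
  unfold pncT
  rw [hsub, ← intervalIntegral.integral_const_mul]
  congr 1
  apply intervalIntegral.integral_congr
  intro s _
  simp only [Real.exp_sub]
  rw [Real.exp_neg]
  ring

lemma pncT_cont {i : Fin n} (hdc : Continuous (d i))
    (hH : Continuous (pncH a b τd I g f u i)) :
    Continuous fun t => pncT ω d a b τd I g f u t i := by
  have hc : Continuous fun s => Real.exp (pncE (d i) s) * pncH a b τd I g f u i s := by
    unfold pncE
    exact ((pnc_continuous_primitive hdc).rexp).mul hH
  unfold pncT pncE
  apply Continuous.mul continuous_const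
  apply Continuous.mul
  · exact (pnc_continuous_primitive hdc).neg.rexp
  · apply Continuous.sub
    · exact pnc_continuous_primitive hc
    · exact (pnc_continuous_primitive hc).comp (continuous_id.sub continuous_const)

lemma pncE_shift {i : Fin n} (hdc : Continuous (d i))
    (hdp : ∀ t, d i (t + ω) = d i t) (x : ℝ) :
    pncE (d i) (x + ω) = pncE (d i) x + pncE (d i) ω := by
  have h := pnc_E_diff hdc hdp (x + ω)
  rw [add_sub_cancel_right] at h
  simp only [pncE]
  linarith [h]

lemma pncT_per {i : Fin n} (hdc : Continuous (d i))
    (hdp : ∀ t, d i (t + ω) = d i t)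
    (hH : Continuous (pncH a b τd I g f u i))
    (hHper : ∀ s, pncH a b τd I g f u i (s + ω) = pncH a b τd I g f u i s) (t : ℝ) :
    pncT ω d a b τd I g f u (t + ω) i = pncT ω d a b τd I g f u t i := by
  rw [pncT_repr hdc hH, pncT_repr hdc hH]
  congr 1
  have hshift := intervalIntegral.integral_comp_add_right (a := t - ω) (b := t)
    (fun s => Real.exp (pncE (d i) s - pncE (d i) (t + ω)) * pncH a b τd I g f u i s) ω
  rw [sub_add_cancel] at hshift
  have harg : t + ω - ω = t := by ring
  rw [harg, ← hshift]
  apply intervalIntegral.integral_congr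
  intro s _
  simp only [pncE_shift hdc hdp, hHper]
  congr 2
  ring

lemma pncT_deriv {i : Fin n} (hdc : Continuous (d i))
    (hdp : ∀ t, d i (t + ω) = d i t)
    (hH : Continuous (pncH a b τd I g f u i))
    (hHper : ∀ s, pncH a b τd I g f u i (s + ω) = pncH a b τd I g f u i s)
    (hθ : 0 < pncE (d i) ω) (t : ℝ) :
    HasDerivAt (fun t => pncT ω d a b τd I g f u t i)
      (-(d i t) * pncT ω d a b τd I g f u t i + pncH a b τd I g f u i t) t := by
  have hc : Continuous fun s => Real.exp (pncE (d i) s) * pncH a b τd I g f u i s := by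
    unfold pncE
    exact ((pnc_continuous_primitive hdc).rexp).mul hH
  have hP : ∀ x : ℝ, HasDerivAt (pncE (d i)) (d i x) x := fun x =>
    pnc_hasDerivAt_primitive hdc x
  have hΦ : ∀ x : ℝ, HasDerivAt
      (fun x => ∫ s in (0:ℝ)..x, Real.exp (pncE (d i) s) * pncH a b τd I g f u i s)
      (Real.exp (pncE (d i) x) * pncH a b τd I g f u i x) x := fun x =>
    pnc_hasDerivAt_primitive hc x
  have hΦω : HasDerivAt
      (fun x => ∫ s in (0:ℝ)..(x - ω), Real.exp (pncE (d i) s) * pncH a b τd I g f u i s)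
      (Real.exp (pncE (d i) (t - ω)) * pncH a b τd I g f u i (t - ω)) t := by
    have := (hΦ (t - ω)).comp t ((hasDerivAt_id t).sub_const ω)
    simpa [Function.comp_def] using this
  have h1 : HasDerivAt (fun x => Real.exp (-(pncE (d i) x)))
      (Real.exp (-(pncE (d i) t)) * (-(d i t))) t := ((hP t).neg).exp
  have hprod := (h1.mul ((hΦ t).sub hΦω)).const_mul
    ((1 - Real.exp (-(pncE (d i) ω)))⁻¹)
  have hne : 1 - Real.exp (-(pncE (d i) ω)) ≠ 0 := by
    have : Real.exp (-(pncE (d i) ω)) < 1 := Real.exp_lt_one_iff.mpr (by linarith)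
    linarith
  have e3 : pncH a b τd I g f u i (t - ω) = pncH a b τd I g f u i t := by
    have := hHper (t - ω)
    rw [sub_add_cancel] at this
    exact this.symm
  have eθ : pncE (d i) t - pncE (d i) (t - ω) = pncE (d i) ω := by
    have := pnc_E_diff hdc hdp t
    unfold pncE at *
    linarith
  have e2 : Real.exp (-(pncE (d i) t)) * Real.exp (pncE (d i) (t - ω))
      = Real.exp (-(pncE (d i) ω)) := by
    rw [← Real.exp_add]
    congr 1
    linarith
  have e1 : Real.exp (-(pncE (d i) t)) * Real.exp (pncE (d i) t) = 1 := by
    rw [← Real.exp_add]; simp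
  have key2 : (1 - Real.exp (-(pncE (d i) ω)))⁻¹ *
      (Real.exp (-(pncE (d i) t)) *
        (Real.exp (pncE (d i) t) * pncH a b τd I g f u i t -
         Real.exp (pncE (d i) (t - ω)) * pncH a b τd I g f u i t))
      = pncH a b τd I g f u i t := by
    have hstep : Real.exp (-(pncE (d i) t)) *
        (Real.exp (pncE (d i) t) * pncH a b τd I g f u i t -
         Real.exp (pncE (d i) (t - ω)) * pncH a b τd I g f u i t)
        = (1 - Real.exp (-(pncE (d i) ω))) * pncH a b τd I g f u i t := by
      rw [mul_sub, ← mul_assoc, ← mul_assoc, e1, e2]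
      ring
    rw [hstep, ← mul_assoc, inv_mul_cancel₀ hne, one_mul]
  have hval : (1 - Real.exp (-(pncE (d i) ω)))⁻¹ *
      (Real.exp (-(pncE (d i) t)) * (-(d i t)) *
        ((∫ s in (0:ℝ)..t, Real.exp (pncE (d i) s) * pncH a b τd I g f u i s) -
         (∫ s in (0:ℝ)..(t - ω), Real.exp (pncE (d i) s) * pncH a b τd I g f u i s)) +
       Real.exp (-(pncE (d i) t)) *
        (Real.exp (pncE (d i) t) * pncH a b τd I g f u i t -
         Real.exp (pncE (d i) (t - ω)) * pncH a b τd I g f u i (t - ω)))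
      = -(d i t) * pncT ω d a b τd I g f u t i + pncH a b τd I g f u i t := by
    unfold pncT
    rw [e3, mul_add, key2]
    ring
  rw [← hval]
  exact hprod

end core2
lemma pnc_key_estimate {dd c : ℝ → ℝ} {ω η Dm μ0 : ℝ} {S : Set ℝ}
    (hω : 0 < ω) (hdc : Continuous dd) (hdp : ∀ t, dd (t + ω) = dd t)
    (hcc : Continuous c) (hcd : ∀ s, c s ≤ dd s)
    (hd0 : ∀ s, 0 ≤ dd s) (hDm : ∀ s, dd s ≤ Dm)
    (hSm : MeasurableSet S) (hSper : ∀ x : ℝ, x + ω ∈ S ↔ x ∈ S)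
    (hηS : ∀ s ∈ S, η ≤ dd s - c s) (hη : 0 ≤ η)
    (hμ0 : μ0 ≤ (volume (S ∩ Ioc 0 ω)).toReal) (hμ0' : 0 ≤ μ0)
    (t : ℝ) :
    (∫ s in (t-ω)..t, Real.exp (pncE dd s - pncE dd t) * c s)
      ≤ 1 - Real.exp (-(pncE dd ω)) - η * Real.exp (-(Dm * ω)) * μ0 := by
  have hEc : Continuous (pncE dd) := by
    unfold pncE; exact pnc_continuous_primitive hdc
  have hKc : Continuous fun s => Real.exp (pncE dd s - pncE dd t) :=
    ((hEc.sub continuous_const).rexp)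
  have hkd : (∫ s in (t-ω)..t, Real.exp (pncE dd s - pncE dd t) * dd s)
      = 1 - Real.exp (-(pncE dd ω)) := by
    have h0 := pnc_kernel_integral hdc (t-ω) t
    have hE : pncE dd (t-ω) - pncE dd t = -(pncE dd ω) := by
      have := pnc_E_diff hdc hdp t
      simp only [pncE] at *
      linarith
    unfold pncE at hE h0 ⊢
    rw [h0, hE]
  have hsplit : (∫ s in (t-ω)..t, Real.exp (pncE dd s - pncE dd t) * c s)
      = (∫ s in (t-ω)..t, Real.exp (pncE dd s - pncE dd t) * dd s)
        - ∫ s in (t-ω)..t, Real.exp (pncE dd s - pncE dd t) * (dd s - c s) := by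
    rw [← intervalIntegral.integral_sub (f := fun s => Real.exp (pncE dd s - pncE dd t) * dd s)
      (g := fun s => Real.exp (pncE dd s - pncE dd t) * (dd s - c s)) ((hKc.mul hdc).intervalIntegrable _ _)
      ((hKc.mul (hdc.sub hcc)).intervalIntegrable _ _)]
    apply intervalIntegral.integral_congr
    intro s _
    ring
  have hlow : η * Real.exp (-(Dm * ω)) * μ0
      ≤ ∫ s in (t-ω)..t, Real.exp (pncE dd s - pncE dd t) * (dd s - c s) := by
    have hDm0 : 0 ≤ Dm := le_trans (hd0 0) (hDm 0)
    have hκ : 0 ≤ η * Real.exp (-(Dm * ω)) := by positivity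
    have hmeas : volume (S ∩ Ioc (t-ω) t) = volume (S ∩ Ioc 0 ω) := by
      have := pnc_periodic_meas_window hω hSper hSm (t-ω)
      rw [sub_add_cancel] at this
      exact this
    have hKlow : ∀ s ∈ Ioc (t-ω) t,
        Real.exp (-(Dm * ω)) ≤ Real.exp (pncE dd s - pncE dd t) := by
      intro s hs
      apply Real.exp_le_exp.mpr
      have hst : s ≤ t := hs.2
      have hadd : pncE dd s + (∫ r in s..t, dd r) = pncE dd t := by
        unfold pncE
        exact intervalIntegral.integral_add_adjacent_intervals
          (hdc.intervalIntegrable _ _) (hdc.intervalIntegrable _ _)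
      have hb : (∫ r in s..t, dd r) ≤ Dm * (t - s) := by
        have := intervalIntegral.integral_mono_on (μ := volume) hst (hdc.intervalIntegrable _ _)
          ((continuous_const : Continuous fun _ : ℝ => Dm).intervalIntegrable _ _) (fun r _ => hDm r)
        simpa [mul_comm] using this
      have hts : t - s ≤ ω := by
        have := hs.1
        linarith
      nlinarith
    calc η * Real.exp (-(Dm * ω)) * μ0
        ≤ η * Real.exp (-(Dm * ω)) * (volume (S ∩ Ioc (t-ω) t)).toReal := by
          apply mul_le_mul_of_nonneg_left _ hκ
          rw [hmeas]; exact hμ0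
      _ ≤ ∫ s in (t-ω)..t, Real.exp (pncE dd s - pncE dd t) * (dd s - c s) := by
          apply pnc_integral_ge_meas (φ := fun s => Real.exp (pncE dd s - pncE dd t) * (dd s - c s))
            (hKc.mul (hdc.sub hcc))
            (fun s => mul_nonneg (le_of_lt (Real.exp_pos _)) (by linarith [hcd s]))
            hSm (by linarith)
          intro s hs
          calc η * Real.exp (-(Dm * ω)) = Real.exp (-(Dm * ω)) * η := by ring
            _ ≤ Real.exp (pncE dd s - pncE dd t) * (dd s - c s) :=
                mul_le_mul (hKlow s hs.2) (hηS s hs.1) hη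
                  (le_of_lt (Real.exp_pos _))
  rw [hsplit, hkd]
  linarith

/-- **Periodic neural networks (Corollary 3).** Consider
`u̇ᵢ(t) = -dᵢ(t) uᵢ(t) + Σⱼ aᵢⱼ(t) gⱼ(uⱼ(t)) + Σⱼ bᵢⱼ(t) fⱼ(uⱼ(t - τᵢⱼ(t))) + Iᵢ(t)` with
continuous `ω`-periodic coefficients, `dᵢ(t) > dᵢ > 0`, `0 < τᵢⱼ(t) ≤ τ_max`, Lipschitz
activations (`Gᵢ`, `Fᵢ`), `0 ≤ dᵢ(t) - Σⱼ Gⱼ|aᵢⱼ(t)| ≤ M_a`, `Σⱼ Fⱼ|bᵢⱼ(t)| ≤ M_b`.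
If `dᵢ(t) - Σⱼ |aᵢⱼ(t)| Gⱼ - Σⱼ |bᵢⱼ(t)| Fⱼ ≥ 0` for all `t, i` and there exists `η > 0`
such that `S̄_η = {t ∈ [0,ω] : ∀ i, dᵢ(t) - Σⱼ (Gⱼ|aᵢⱼ(t)| + Fⱼ|bᵢⱼ(t)|) ≥ η}` has
positive Lebesgue measure, then the network has an `ω`-periodic solution which is
exponentially asymptotically stable. -/
theorem periodic_network_corollary
    (n : ℕ) (hn : 0 < n) (ω τmax Ma Mb : ℝ)
    (hω : 0 < ω) (hτmax : 0 < τmax)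
    (d : Fin n → ℝ → ℝ) (a b : Fin n → Fin n → ℝ → ℝ) (τd : Fin n → Fin n → ℝ → ℝ)
    (I : Fin n → ℝ → ℝ) (g f : Fin n → ℝ → ℝ) (G F dl : Fin n → ℝ)
    (hdcont : ∀ i, Continuous (d i)) (hacont : ∀ i j, Continuous (a i j))
    (hbcont : ∀ i j, Continuous (b i j)) (hτcont : ∀ i j, Continuous (τd i j))
    (hIcont : ∀ i, Continuous (I i))
    (hdper : ∀ i (t : ℝ), d i (t + ω) = d i t)
    (haper : ∀ i j (t : ℝ), a i j (t + ω) = a i j t)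
    (hbper : ∀ i j (t : ℝ), b i j (t + ω) = b i j t)
    (hτper : ∀ i j (t : ℝ), τd i j (t + ω) = τd i j t)
    (hIper : ∀ i (t : ℝ), I i (t + ω) = I i t)
    (hdl : ∀ i, 0 < dl i) (hd : ∀ i (t : ℝ), dl i < d i t)
    (hτd : ∀ i j (t : ℝ), 0 < τd i j t ∧ τd i j t ≤ τmax)
    (hg : ∀ i (x h : ℝ), |g i (x + h) - g i x| ≤ G i * |h|)
    (hf : ∀ i (x h : ℝ), |f i (x + h) - f i x| ≤ F i * |h|)
    (hMa : ∀ i (t : ℝ), 0 ≤ d i t - ∑ j, G j * |a i j t| ∧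
      d i t - ∑ j, G j * |a i j t| ≤ Ma)
    (hMb : ∀ i (t : ℝ), ∑ j, F j * |b i j t| ≤ Mb)
    (hnonneg : ∀ i (t : ℝ),
      0 ≤ d i t - (∑ j, |a i j t| * G j) - ∑ j, |b i j t| * F j)
    (hμη : ∃ η > (0 : ℝ), 0 < MeasureTheory.volume
      {t ∈ Set.Icc (0 : ℝ) ω |
        ∀ i, η ≤ d i t - ∑ j, (G j * |a i j t| + F j * |b i j t|)}) :
    ∃ x : Fin n → ℝ → ℝ,
      (∀ i, Continuous (x i)) ∧
      (∀ i (t : ℝ), HasDerivAt (x i)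
        (-(d i t) * x i t + (∑ j, a i j t * g j (x j t)) +
          (∑ j, b i j t * f j (x j (t - τd i j t))) + I i t) t) ∧
      (∀ i (t : ℝ), x i (t + ω) = x i t) ∧
      ∃ α > (0 : ℝ), ∀ u : Fin n → ℝ → ℝ,
        (∀ i, Continuous (u i)) →
        (∀ i, ∀ t > (0 : ℝ), HasDerivAt (u i)
          (-(d i t) * u i t + (∑ j, a i j t * g j (u j t)) +
            (∑ j, b i j t * f j (u j (t - τd i j t))) + I i t) t) →
        ∃ C : ℝ, ∀ t ≥ (0 : ℝ),
          ‖(fun i => u i t - x i t : Fin n → ℝ)‖ ≤ C * Real.exp (-α * t) := by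
  classical
  obtain ⟨η, hη, hμpos⟩ := hμη
  have hgc : ∀ i, Continuous (g i) := fun i => pnc_lip_cont (hg i)
  have hfc : ∀ i, Continuous (f i) := fun i => pnc_lip_cont (hf i)
  have hG0 : ∀ j, 0 ≤ G j := fun j => pnc_lip_nonneg (hg j)
  have hF0 : ∀ j, 0 ≤ F j := fun j => pnc_lip_nonneg (hf j)
  have hd0 : ∀ i t, 0 ≤ d i t := fun i t => le_of_lt (lt_trans (hdl i) (hd i t))
  haveI hFinNe : Nonempty (Fin n) := Fin.pos_iff_nonempty.mp hn
  -- upper bounds for d i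
  have hDmex : ∀ i : Fin n, ∃ C, 0 ≤ C ∧ ∀ t, d i t ≤ C := by
    intro i
    obtain ⟨C, hC0, hC⟩ := pnc_periodic_bound hω (hdcont i) (hdper i)
    exact ⟨C, hC0, fun t => le_trans (le_abs_self _) (hC t)⟩
  choose Dm hDm0 hDmb using hDmex
  -- positivity of θ i = ∫ d i over one period
  have hθ : ∀ i, 0 < pncE (d i) ω := by
    intro i
    unfold pncE
    have h1 : (0:ℝ) < dl i * ω := mul_pos (hdl i) hω
    have h2 : ∫ s in (0:ℝ)..ω, (dl i : ℝ) ≤ ∫ s in (0:ℝ)..ω, d i s := by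
      apply intervalIntegral.integral_mono_on (μ := volume) (le_of_lt hω)
        ((continuous_const : Continuous fun _ : ℝ => dl i).intervalIntegrable _ _)
        ((hdcont i).intervalIntegrable _ _)
      exact fun s _ => le_of_lt (hd i s)
    rw [intervalIntegral.integral_const] at h2
    simp only [sub_zero, smul_eq_mul] at h2
    nlinarith
  have hθ1 : ∀ i, Real.exp (-(pncE (d i) ω)) < 1 := fun i =>
    Real.exp_lt_one_iff.mpr (by linarith [hθ i])
  have hcipos : ∀ i, 0 < 1 - Real.exp (-(pncE (d i) ω)) := fun i => by linarith [hθ1 i]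
  have hcile : ∀ i, 1 - Real.exp (-(pncE (d i) ω)) ≤ 1 := fun i => by
    have := Real.exp_pos (-(pncE (d i) ω)); linarith
  -- the good set S and the coefficient functions cf i
  set S : Set ℝ := {t | ∀ i, η ≤ d i t - ∑ j, (G j * |a i j t| + F j * |b i j t|)} with hSdef
  set cf : Fin n → ℝ → ℝ := fun i s => ∑ j, (G j * |a i j s| + F j * |b i j s|) with hcfdef
  have hcfc : ∀ i, Continuous (cf i) := by
    intro i
    apply continuous_finset_sum
    intro j _
    exact (continuous_const.mul (hacont i j).abs).add (continuous_const.mul (hbcont i j).abs)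
  have hcf0 : ∀ i s, 0 ≤ cf i s := by
    intro i s
    apply Finset.sum_nonneg
    intro j _
    have := abs_nonneg (a i j s); have := abs_nonneg (b i j s)
    have := hG0 j; have := hF0 j
    positivity
  have hcfd : ∀ i s, cf i s ≤ d i s := by
    intro i s
    have h0 := hnonneg i s
    have hsum : cf i s = (∑ j, |a i j s| * G j) + ∑ j, |b i j s| * F j := by
      rw [hcfdef, ← Finset.sum_add_distrib]
      exact Finset.sum_congr rfl fun j _ => by ring
    rw [hsum]
    linarith
  have hSm : MeasurableSet S := by
    have : IsClosed S := by
      have : S = ⋂ i : Fin n, {t : ℝ | η ≤ d i t - ∑ j, (G j * |a i j t| + F j * |b i j t|)} := by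
        ext t; simp [hSdef, Set.mem_iInter]
      rw [this]
      apply isClosed_iInter
      intro i
      exact isClosed_le continuous_const ((hdcont i).sub (hcfc i))
    exact this.measurableSet
  have hSper : ∀ x : ℝ, x + ω ∈ S ↔ x ∈ S := by
    intro x
    have hexp : ∀ i, d i (x + ω) - (∑ j, (G j * |a i j (x + ω)| + F j * |b i j (x + ω)|))
        = d i x - ∑ j, (G j * |a i j x| + F j * |b i j x|) := by
      intro i
      rw [hdper]
      congr 1
      exact Finset.sum_congr rfl fun j _ => by rw [haper, hbper]
    constructor <;> intro hx i
    · have := hx i; rwa [hexp i] at this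
    · rw [hexp i]; exact hx i
  -- positive measure
  set μ0 : ℝ := (volume (S ∩ Set.Ioc 0 ω)).toReal with hμ0def
  have hμ0fin : volume (S ∩ Set.Ioc 0 ω) ≠ ⊤ :=
    ne_top_of_le_ne_top (by simp) (measure_mono Set.inter_subset_right)
  have hμ0pos : 0 < μ0 := by
    have hseteq : {t ∈ Set.Icc (0:ℝ) ω | ∀ i, η ≤ d i t -
        ∑ j, (G j * |a i j t| + F j * |b i j t|)} ⊆ (S ∩ Set.Ioc 0 ω) ∪ {0} := by
      intro t ht
      obtain ⟨⟨h0, h1⟩, h2⟩ := ht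
      rcases eq_or_lt_of_le h0 with h | h
      · right; simp [← h]
      · left; exact ⟨h2, h, h1⟩
    have hle := measure_mono (μ := volume) hseteq
    have hun : volume ((S ∩ Set.Ioc 0 ω) ∪ {0}) ≤ volume (S ∩ Set.Ioc 0 ω) + volume ({0} : Set ℝ) :=
      measure_union_le _ _
    rw [Real.volume_singleton, add_zero] at hun
    have hpos : 0 < volume (S ∩ Set.Ioc 0 ω) := lt_of_lt_of_le hμpos (le_trans hle hun)
    exact ENNReal.toReal_pos (ne_of_gt hpos) hμ0fin
  -- the margins δ i and the contraction factor q
  set δ : Fin n → ℝ := fun i => η * Real.exp (-(Dm i * ω)) * μ0 with hδdef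
  have hδpos : ∀ i, 0 < δ i := by
    intro i
    have := Real.exp_pos (-(Dm i * ω))
    rw [hδdef]
    positivity
  have key : ∀ (i : Fin n) (t : ℝ),
      (∫ s in (t-ω)..t, Real.exp (pncE (d i) s - pncE (d i) t) * cf i s)
        ≤ 1 - Real.exp (-(pncE (d i) ω)) - δ i := by
    intro i t
    apply pnc_key_estimate hω (hdcont i) (hdper i) (hcfc i) (hcfd i) (hd0 i) (hDmb i)
      hSm hSper _ (le_of_lt hη) le_rfl (le_of_lt hμ0pos) t
    intro s hs
    have := hs i
    rw [hcfdef]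
    linarith
  -- contraction factor
  set δm : ℝ := Finset.univ.inf' Finset.univ_nonempty δ with hδmdef
  have hδmpos : 0 < δm := by
    rw [hδmdef, Finset.lt_inf'_iff]
    exact fun i _ => hδpos i
  have hδmle : ∀ i, δm ≤ δ i := fun i => Finset.inf'_le _ (Finset.mem_univ i)
  set ε : ℝ := min δm (1/2) with hεdef
  have hεpos : 0 < ε := lt_min hδmpos (by norm_num)
  have hεle2 : ε ≤ 1/2 := min_le_right _ _
  have hεleδ : ∀ i, ε ≤ δ i := fun i => le_trans (min_le_left _ _) (hδmle i)
  set q : ℝ := 1 - ε with hqdef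
  have hq0 : 0 < q := by rw [hqdef]; linarith
  have hq1 : q < 1 := by rw [hqdef]; linarith
  -- the componentwise contraction estimate for the operator pncT
  have hcomp : ∀ (uu vv : ℝ → Fin n → ℝ), Continuous uu → Continuous vv →
      ∀ (D : ℝ), 0 ≤ D → ∀ (i : Fin n) (t : ℝ),
      (∀ (j : Fin n), |uu t j - vv t j| ≤ D) →
      (∀ (s : ℝ) (j : Fin n), s ∈ Set.Icc (t - ω) t → |uu s j - vv s j| ≤ D) →
      (∀ (s : ℝ) (j : Fin n), s ∈ Set.Icc (t - ω) t →
        |uu (s - τd i j s) j - vv (s - τd i j s) j| ≤ D) →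
      |pncT ω d a b τd I g f uu t i - pncT ω d a b τd I g f vv t i| ≤ q * D := by
    intro uu vv huu hvv D hD0 i t hbDt hbD1 hbD2
    have hHu : Continuous (pncH a b τd I g f uu i) :=
      pncH_cont hacont hbcont hτcont hIcont hgc hfc huu i
    have hHv : Continuous (pncH a b τd I g f vv i) :=
      pncH_cont hacont hbcont hτcont hIcont hgc hfc hvv i
    have hEc : Continuous (pncE (d i)) := by
      unfold pncE; exact pnc_continuous_primitive (hdcont i)
    have hKc : Continuous fun s => Real.exp (pncE (d i) s - pncE (d i) t) :=
      (hEc.sub continuous_const).rexp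
    rw [pncT_repr (hdcont i) hHu, pncT_repr (hdcont i) hHv]
    have hIu := (hKc.mul hHu).intervalIntegrable (μ := volume) (t-ω) t
    have hIv := (hKc.mul hHv).intervalIntegrable (μ := volume) (t-ω) t
    have hdiff : (∫ s in (t-ω)..t, Real.exp (pncE (d i) s - pncE (d i) t) * pncH a b τd I g f uu i s) -
        (∫ s in (t-ω)..t, Real.exp (pncE (d i) s - pncE (d i) t) * pncH a b τd I g f vv i s)
        = ∫ s in (t-ω)..t, (Real.exp (pncE (d i) s - pncE (d i) t) * pncH a b τd I g f uu i s
            - Real.exp (pncE (d i) s - pncE (d i) t) * pncH a b τd I g f vv i s) :=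
      (intervalIntegral.integral_sub hIu hIv).symm
    have habs : |∫ s in (t-ω)..t, (Real.exp (pncE (d i) s - pncE (d i) t) * pncH a b τd I g f uu i s
            - Real.exp (pncE (d i) s - pncE (d i) t) * pncH a b τd I g f vv i s)|
        ≤ ∫ s in (t-ω)..t, Real.exp (pncE (d i) s - pncE (d i) t) * cf i s * D := by
      apply pnc_int_abs_le (φ := fun s => Real.exp (pncE (d i) s - pncE (d i) t) * pncH a b τd I g f uu i s
          - Real.exp (pncE (d i) s - pncE (d i) t) * pncH a b τd I g f vv i s)
        (ψ := fun s => Real.exp (pncE (d i) s - pncE (d i) t) * cf i s * D) (by linarith) ((hKc.mul hHu).sub (hKc.mul hHv))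
        (((hKc.mul (hcfc i)).mul continuous_const))
      intro s hs
      have h1 : |Real.exp (pncE (d i) s - pncE (d i) t) * pncH a b τd I g f uu i s
          - Real.exp (pncE (d i) s - pncE (d i) t) * pncH a b τd I g f vv i s|
          = Real.exp (pncE (d i) s - pncE (d i) t) *
            |pncH a b τd I g f uu i s - pncH a b τd I g f vv i s| := by
        rw [← mul_sub, abs_mul, abs_of_pos (Real.exp_pos _)]
      rw [h1]
      have h2 := pncH_diff_bound (a := a) (b := b) (τd := τd) (I := I) hg hf i s
        (fun j => hbD1 s j hs) (fun j => hbD2 s j hs)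
      calc Real.exp (pncE (d i) s - pncE (d i) t) *
            |pncH a b τd I g f uu i s - pncH a b τd I g f vv i s|
          ≤ Real.exp (pncE (d i) s - pncE (d i) t) * (cf i s * D) := by
            apply mul_le_mul_of_nonneg_left _ (le_of_lt (Real.exp_pos _))
            simpa [hcfdef] using h2
        _ = Real.exp (pncE (d i) s - pncE (d i) t) * cf i s * D := by ring
    have hintc : (∫ s in (t-ω)..t, Real.exp (pncE (d i) s - pncE (d i) t) * cf i s * D)
        = (∫ s in (t-ω)..t, Real.exp (pncE (d i) s - pncE (d i) t) * cf i s) * D :=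
      intervalIntegral.integral_mul_const _ _
    have hkey := key i t
    have hne : 1 - Real.exp (-(pncE (d i) ω)) ≠ 0 := ne_of_gt (hcipos i)
    have hinv1 : 1 ≤ (1 - Real.exp (-(pncE (d i) ω)))⁻¹ :=
      (one_le_inv_iff₀.mpr ⟨hcipos i, hcile i⟩)
    calc |(1 - Real.exp (-(pncE (d i) ω)))⁻¹ *
          (∫ s in (t-ω)..t, Real.exp (pncE (d i) s - pncE (d i) t) * pncH a b τd I g f uu i s) -
          (1 - Real.exp (-(pncE (d i) ω)))⁻¹ *
          (∫ s in (t-ω)..t, Real.exp (pncE (d i) s - pncE (d i) t) * pncH a b τd I g f vv i s)|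
        = (1 - Real.exp (-(pncE (d i) ω)))⁻¹ *
          |(∫ s in (t-ω)..t, Real.exp (pncE (d i) s - pncE (d i) t) * pncH a b τd I g f uu i s) -
           (∫ s in (t-ω)..t, Real.exp (pncE (d i) s - pncE (d i) t) * pncH a b τd I g f vv i s)| := by
          rw [← mul_sub, abs_mul, abs_of_pos (inv_pos.mpr (hcipos i))]
      _ ≤ (1 - Real.exp (-(pncE (d i) ω)))⁻¹ *
          ((1 - Real.exp (-(pncE (d i) ω)) - δ i) * D) := by
          apply mul_le_mul_of_nonneg_left _ (le_of_lt (inv_pos.mpr (hcipos i)))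
          rw [hdiff]
          refine le_trans habs ?_
          rw [hintc]
          exact mul_le_mul_of_nonneg_right hkey hD0
      _ ≤ q * D := by
          have h7 : (1 - Real.exp (-(pncE (d i) ω)))⁻¹ *
              ((1 - Real.exp (-(pncE (d i) ω)) - δ i) * D)
              = D - (1 - Real.exp (-(pncE (d i) ω)))⁻¹ * (δ i * D) := by
            field_simp
          have h5 : ε * D ≤ δ i * D := mul_le_mul_of_nonneg_right (hεleδ i) hD0
          have h6 : δ i * D ≤ (1 - Real.exp (-(pncE (d i) ω)))⁻¹ * (δ i * D) :=
            le_mul_of_one_le_left (mul_nonneg (le_of_lt (hδpos i)) hD0) hinv1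
          rw [h7, hqdef]
          linarith
  -- existence of the periodic fixed point
  have hxex : ∃ xh : ℝ → Fin n → ℝ, Continuous xh ∧ (∀ t, xh (t + ω) = xh t) ∧
      ∀ t i, xh t i = pncT ω d a b τd I g f xh t i := by
    set P : Set (BoundedContinuousFunction ℝ (Fin n → ℝ)) :=
      {w | ∀ t, w (t + ω) = w t} with hPdef
    have hPclosed : IsClosed P := by
      have hPeq : P = ⋂ t : ℝ,
          {w : BoundedContinuousFunction ℝ (Fin n → ℝ) | w (t + ω) = w t} := by
        ext w; simp [hPdef, Set.mem_iInter]
      rw [hPeq]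
      exact isClosed_iInter fun t => isClosed_eq
        (BoundedContinuousFunction.lipschitz_eval_const _).continuous
        (BoundedContinuousFunction.lipschitz_eval_const _).continuous
    haveI := hPclosed.completeSpace_coe
    haveI : Nonempty P := ⟨⟨0, fun t => rfl⟩⟩
    have hTex : ∀ w : P, ∃ Tw : P, ∀ (t : ℝ) (i : Fin n),
        (Tw : BoundedContinuousFunction ℝ (Fin n → ℝ)) t i
          = pncT ω d a b τd I g f (w : BoundedContinuousFunction ℝ (Fin n → ℝ)) t i := by
      intro w
      have hwc : Continuous (w : BoundedContinuousFunction ℝ (Fin n → ℝ)) :=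
        (w : BoundedContinuousFunction ℝ (Fin n → ℝ)).continuous
      have hHc : ∀ i, Continuous (pncH a b τd I g f
          (w : BoundedContinuousFunction ℝ (Fin n → ℝ)) i) :=
        fun i => pncH_cont hacont hbcont hτcont hIcont hgc hfc hwc i
      have hHper : ∀ i s, pncH a b τd I g f
          (w : BoundedContinuousFunction ℝ (Fin n → ℝ)) i (s + ω)
          = pncH a b τd I g f (w : BoundedContinuousFunction ℝ (Fin n → ℝ)) i s :=
        fun i s => pncH_per haper hbper hτper hIper w.2 i s
      have hTc : Continuous fun t => (fun i =>
          pncT ω d a b τd I g f (w : BoundedContinuousFunction ℝ (Fin n → ℝ)) t i) :=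
        continuous_pi fun i => pncT_cont (hdcont i) (hHc i)
      have hTper : ∀ t, (fun i =>
          pncT ω d a b τd I g f (w : BoundedContinuousFunction ℝ (Fin n → ℝ)) (t + ω) i)
          = fun i => pncT ω d a b τd I g f (w : BoundedContinuousFunction ℝ (Fin n → ℝ)) t i :=
        fun t => funext fun i => pncT_per (hdcont i) (hdper i) (hHc i) (hHper i) t
      obtain ⟨C, hC0, hC⟩ := pnc_periodic_bound hω hTc hTper
      exact ⟨⟨BoundedContinuousFunction.ofNormedAddCommGroup _ hTc C hC,
        fun t => hTper t⟩, fun t i => rfl⟩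
    choose T hT using hTex
    have hlip : ∀ w v : P, dist (T w) (T v) ≤ q * dist w v := by
      intro w v
      rw [Subtype.dist_eq]
      apply (BoundedContinuousFunction.dist_le (mul_nonneg (le_of_lt hq0) dist_nonneg)).mpr
      intro t
      apply (dist_pi_le_iff (mul_nonneg (le_of_lt hq0) dist_nonneg)).mpr
      intro i
      rw [Real.dist_eq, hT w t i, hT v t i]
      have hbD : ∀ (s : ℝ) (j : Fin n),
          |(w : BoundedContinuousFunction ℝ (Fin n → ℝ)) s j
            - (v : BoundedContinuousFunction ℝ (Fin n → ℝ)) s j| ≤ dist w v := by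
        intro s j
        rw [← Real.dist_eq]
        calc dist ((w : BoundedContinuousFunction ℝ (Fin n → ℝ)) s j)
              ((v : BoundedContinuousFunction ℝ (Fin n → ℝ)) s j)
            ≤ dist ((w : BoundedContinuousFunction ℝ (Fin n → ℝ)) s)
              ((v : BoundedContinuousFunction ℝ (Fin n → ℝ)) s) := dist_le_pi_dist _ _ j
          _ ≤ dist (w : BoundedContinuousFunction ℝ (Fin n → ℝ))
              (v : BoundedContinuousFunction ℝ (Fin n → ℝ)) :=
              BoundedContinuousFunction.dist_coe_le_dist s
          _ = dist w v := (Subtype.dist_eq w v).symm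
      exact hcomp _ _ (w : BoundedContinuousFunction ℝ (Fin n → ℝ)).continuous
        (v : BoundedContinuousFunction ℝ (Fin n → ℝ)).continuous (dist w v) dist_nonneg i t
        (fun j => hbD t j) (fun s j _ => hbD s j) (fun s j _ => hbD _ j)
    have hctr : ContractingWith (Real.toNNReal q) T := by
      constructor
      · rw [← NNReal.coe_lt_one, Real.coe_toNNReal q (le_of_lt hq0)]
        exact hq1
      · apply LipschitzWith.of_dist_le_mul
        intro w v
        rw [Real.coe_toNNReal q (le_of_lt hq0)]
        exact hlip w v
    set z := ContractingWith.fixedPoint T hctr with hzdef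
    have hfix : T z = z := hctr.fixedPoint_isFixedPt
    refine ⟨fun t => (z : BoundedContinuousFunction ℝ (Fin n → ℝ)) t,
      (z : BoundedContinuousFunction ℝ (Fin n → ℝ)).continuous, z.2, ?_⟩
    intro t i
    have := hT z t i
    rw [hfix] at this
    exact this
  obtain ⟨xh, hxhc, hxhper, hxhfix⟩ := hxex
  have hHxc : ∀ i, Continuous (pncH a b τd I g f xh i) :=
    fun i => pncH_cont hacont hbcont hτcont hIcont hgc hfc hxhc i
  have hHxper : ∀ i s, pncH a b τd I g f xh i (s + ω) = pncH a b τd I g f xh i s :=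
    fun i s => pncH_per haper hbper hτper hIper hxhper i s
  have hxderiv : ∀ i t, HasDerivAt (fun t => xh t i)
      (-(d i t) * xh t i + pncH a b τd I g f xh i t) t := by
    intro i t
    have h1 := pncT_deriv (hdcont i) (hdper i) (hHxc i) (hHxper i) (hθ i) t
    have hfun : (fun t => xh t i) = fun t => pncT ω d a b τd I g f xh t i :=
      funext fun t => hxhfix t i
    rw [hfun, hxhfix t i]
    exact h1
  refine ⟨fun i t => xh t i, fun i => (continuous_apply i).comp hxhc, ?_, ?_, ?_⟩
  · intro i t
    have hval : -(d i t) * xh t i + (∑ j, a i j t * g j (xh t j)) +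
        (∑ j, b i j t * f j (xh (t - τd i j t) j)) + I i t
        = -(d i t) * xh t i + pncH a b τd I g f xh i t := by
      unfold pncH; ring
    show HasDerivAt (fun t => xh t i) (-(d i t) * xh t i + (∑ j, a i j t * g j (xh t j)) +
        (∑ j, b i j t * f j (xh (t - τd i j t) j)) + I i t) t
    rw [hval]
    exact hxderiv i t
  · intro i t
    exact congrFun (hxhper t) i
  -- stability
  set r : ℝ := ω + τmax with hrdef
  have hr0 : 0 < r := by rw [hrdef]; linarith
  set α : ℝ := -Real.log q / r with hαdef
  have hα0 : 0 < α := div_pos (neg_pos.mpr (Real.log_neg hq0 hq1)) hr0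
  refine ⟨α, hα0, ?_⟩
  intro u huc huderiv
  set y : ℝ → Fin n → ℝ := fun t => fun j => u j t - xh t j with hydef
  have hyc : Continuous y :=
    continuous_pi fun j => (huc j).sub ((continuous_apply j).comp hxhc)
  have hnc : Continuous fun t => ‖y t‖ := hyc.norm
  have hyabs : ∀ (s : ℝ) (j : Fin n), |u j s - xh s j| ≤ ‖y s‖ := by
    intro s j
    have := norm_le_pi_norm (y s) j
    rwa [Real.norm_eq_abs] at this
  -- the pointwise contraction estimate
  have perpoint : ∀ t : ℝ, 2*ω ≤ t → ∀ D : ℝ, 0 ≤ D →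
      (∀ s, s ∈ Set.Icc (t - r) t → ‖y s‖ ≤ D) → ‖y t‖ ≤ q * D := by
    intro t ht D hD0 hbD
    have hbD' : ∀ (s : ℝ) (j : Fin n), s ∈ Set.Icc (t - r) t → |u j s - xh s j| ≤ D :=
      fun s j hs => le_trans (hyabs s j) (hbD s hs)
    rw [pi_norm_le_iff_of_nonneg (mul_nonneg (le_of_lt hq0) hD0)]
    intro i
    rw [Real.norm_eq_abs]
    show |u i t - xh t i| ≤ q * D
    have hEc : Continuous (pncE (d i)) := by
      unfold pncE; exact pnc_continuous_primitive (hdcont i)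
    have huvc : Continuous (fun s => fun j => u j s : ℝ → Fin n → ℝ) :=
      continuous_pi fun j => huc j
    have hHuc : Continuous (pncH a b τd I g f (fun s => fun j => u j s) i) :=
      pncH_cont hacont hbcont hτcont hIcont hgc hfc huvc i
    have hW : ∀ s ∈ Set.Icc (t-ω) t, HasDerivAt
        (fun s => Real.exp (pncE (d i) s - pncE (d i) t) * (u i s - xh s i))
        (Real.exp (pncE (d i) s - pncE (d i) t) *
          (pncH a b τd I g f (fun s => fun j => u j s) i s - pncH a b τd I g f xh i s)) s := by
      intro s hs
      have hs0 : 0 < s := by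
        have := hs.1; simp only [Set.mem_Icc] at hs ⊢; linarith [hs.1]
      have hu := huderiv i s hs0
      have hx := hxderiv i s
      have hEd : HasDerivAt (fun s => pncE (d i) s - pncE (d i) t) (d i s) s :=
        (pnc_hasDerivAt_primitive (hdcont i) s).sub_const _
      have hprod := (hEd.exp).mul (hu.sub hx)
      refine hprod.congr_deriv ?_
      unfold pncH
      beta_reduce
      simp only [Pi.sub_apply]
      ring
    have hWc : Continuous (fun s => Real.exp (pncE (d i) s - pncE (d i) t) *
        (pncH a b τd I g f (fun s => fun j => u j s) i s - pncH a b τd I g f xh i s)) :=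
      ((hEc.sub continuous_const).rexp).mul (hHuc.sub (hHxc i))
    have hψc : Continuous (fun s => Real.exp (pncE (d i) s - pncE (d i) t) * cf i s * D) :=
      (((hEc.sub continuous_const).rexp).mul (hcfc i)).mul continuous_const
    have hbd : ∀ s ∈ Set.Icc (t-ω) t,
        |Real.exp (pncE (d i) s - pncE (d i) t) *
          (pncH a b τd I g f (fun s => fun j => u j s) i s - pncH a b τd I g f xh i s)|
        ≤ Real.exp (pncE (d i) s - pncE (d i) t) * cf i s * D := by
      intro s hs
      rw [abs_mul, abs_of_pos (Real.exp_pos _)]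
      have hmem1 : s ∈ Set.Icc (t - r) t := by
        simp only [Set.mem_Icc] at hs ⊢
        constructor
        · rw [hrdef]; linarith [hs.1]
        · exact hs.2
      have h2 := pncH_diff_bound (a := a) (b := b) (τd := τd) (I := I)
        (u := fun s => fun j => u j s) (v := xh) (D := D) hg hf i s
        (fun j => hbD' s j hmem1)
        (fun j => by
          show |u j (s - τd i j s) - xh (s - τd i j s) j| ≤ D
          apply hbD' (s - τd i j s) j
          have hτ := hτd i j s
          simp only [Set.mem_Icc] at hs ⊢
          constructor
          · rw [hrdef]; linarith [hs.1, hτ.2]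
          · linarith [hτ.1, hs.2])
      calc Real.exp (pncE (d i) s - pncE (d i) t) *
            |pncH a b τd I g f (fun s => fun j => u j s) i s - pncH a b τd I g f xh i s|
          ≤ Real.exp (pncE (d i) s - pncE (d i) t) * (cf i s * D) := by
            apply mul_le_mul_of_nonneg_left _ (le_of_lt (Real.exp_pos _))
            simpa [hcfdef] using h2
        _ = Real.exp (pncE (d i) s - pncE (d i) t) * cf i s * D := by ring
    have habs := pnc_abs_sub_le_integral (p := t-ω) (q := t) (by linarith) hW hWc hψc hbd
    have heθ : pncE (d i) (t-ω) - pncE (d i) t = -(pncE (d i) ω) := by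
      have := pnc_E_diff (hdcont i) (hdper i) t
      simp only [pncE] at this ⊢
      linarith
    have hwt : Real.exp (pncE (d i) t - pncE (d i) t) * (u i t - xh t i) = u i t - xh t i := by
      simp
    rw [hwt, heθ] at habs
    have htri : |u i t - xh t i| ≤
        |Real.exp (-(pncE (d i) ω)) * (u i (t-ω) - xh (t-ω) i)| +
        |u i t - xh t i - Real.exp (-(pncE (d i) ω)) * (u i (t-ω) - xh (t-ω) i)| := by
      have := abs_add_le (Real.exp (-(pncE (d i) ω)) * (u i (t-ω) - xh (t-ω) i))
        (u i t - xh t i - Real.exp (-(pncE (d i) ω)) * (u i (t-ω) - xh (t-ω) i))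
      simpa using this
    have hintc : (∫ s in (t-ω)..t, Real.exp (pncE (d i) s - pncE (d i) t) * cf i s * D)
        = (∫ s in (t-ω)..t, Real.exp (pncE (d i) s - pncE (d i) t) * cf i s) * D :=
      intervalIntegral.integral_mul_const _ _
    have hkey := key i t
    have hb1 : |Real.exp (-(pncE (d i) ω)) * (u i (t-ω) - xh (t-ω) i)|
        ≤ Real.exp (-(pncE (d i) ω)) * D := by
      rw [abs_mul, abs_of_pos (Real.exp_pos _)]
      apply mul_le_mul_of_nonneg_left _ (le_of_lt (Real.exp_pos _))
      apply hbD' (t-ω) i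
      simp only [Set.mem_Icc]
      constructor
      · rw [hrdef]; linarith
      · linarith
    have hb2 : (∫ s in (t-ω)..t, Real.exp (pncE (d i) s - pncE (d i) t) * cf i s * D)
        ≤ (1 - Real.exp (-(pncE (d i) ω)) - δ i) * D := by
      rw [hintc]
      exact mul_le_mul_of_nonneg_right hkey hD0
    have hδq : (1 - δ i) * D ≤ q * D := by
      apply mul_le_mul_of_nonneg_right _ hD0
      rw [hqdef]
      linarith [hεleδ i]
    calc |u i t - xh t i| ≤ Real.exp (-(pncE (d i) ω)) * D +
          (1 - Real.exp (-(pncE (d i) ω)) - δ i) * D := by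
          linarith [le_trans habs hb2, htri, hb1]
      _ = (1 - δ i) * D := by ring
      _ ≤ q * D := hδq
  -- window suprema
  set t1 : ℝ := 2*ω with ht1def
  have ht10 : 0 ≤ t1 := by rw [ht1def]; linarith
  set M : ℕ → ℝ := fun k =>
    sSup ((fun s => ‖y s‖) '' Set.Icc (t1 + k*r - r) (t1 + k*r)) with hMdef
  have hwindne : ∀ k : ℕ, ((fun s => ‖y s‖) '' Set.Icc (t1 + k*r - r) (t1 + k*r)).Nonempty :=
    fun k => (Set.nonempty_Icc.mpr (by linarith)).image _
  have hbdd : ∀ k : ℕ, BddAbove ((fun s => ‖y s‖) '' Set.Icc (t1 + k*r - r) (t1 + k*r)) :=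
    fun k => (isCompact_Icc.image_of_continuousOn hnc.continuousOn).bddAbove
  have hMub : ∀ (k : ℕ) (s : ℝ), s ∈ Set.Icc (t1 + k*r - r) (t1 + k*r) → ‖y s‖ ≤ M k :=
    fun k s hs => le_csSup (hbdd k) ⟨s, hs, rfl⟩
  have hM0 : ∀ k, 0 ≤ M k := fun k =>
    le_trans (norm_nonneg _) (hMub k (t1 + k*r) ⟨by linarith, le_refl _⟩)
  have hMstep : ∀ k : ℕ, M (k+1) ≤ q * M k := by
    intro k
    have hall : ∀ s ∈ Set.Icc (t1 + (k+1 : ℕ)*r - r) (t1 + (k+1 : ℕ)*r),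
        ‖y s‖ ≤ q * max (M k) (M (k+1)) := by
      intro s hs
      simp only [Set.mem_Icc, Nat.cast_add, Nat.cast_one] at hs
      have hkr0 : 0 ≤ (k:ℝ)*r := mul_nonneg (Nat.cast_nonneg k) (le_of_lt hr0)
      apply perpoint s (by linarith [hs.1])
        (max (M k) (M (k+1))) (le_trans (hM0 k) (le_max_left _ _))
      intro s' hs'
      simp only [Set.mem_Icc] at hs'
      rcases le_or_gt s' (t1 + (k:ℝ)*r) with hc | hc
      · refine le_trans (hMub k s' ⟨?_, hc⟩) (le_max_left _ _)
        linarith [hs'.1, hs.1]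
      · refine le_trans (hMub (k+1) s' ⟨?_, ?_⟩) (le_max_right _ _)
        · push_cast
          linarith [hc]
        · push_cast
          linarith [hs'.2, hs.2]
    have hsup : M (k+1) ≤ q * max (M k) (M (k+1)) := by
      apply csSup_le (hwindne (k+1))
      rintro _ ⟨s, hs, rfl⟩
      exact hall s hs
    rcases le_or_gt (M (k+1)) (M k) with h | h
    · rwa [max_eq_left h] at hsup
    · rw [max_eq_right (le_of_lt h)] at hsup
      nlinarith [hM0 k, hM0 (k+1)]
  have hMk : ∀ k : ℕ, M k ≤ q^k * M 0 := by
    intro k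
    induction k with
    | zero => simp
    | succ m ih =>
      calc M (m+1) ≤ q * M m := hMstep m
        _ ≤ q * (q^m * M 0) := mul_le_mul_of_nonneg_left ih (le_of_lt hq0)
        _ = q^(m+1) * M 0 := by ring
  -- bound on the initial interval [0, t1]
  set C2 : ℝ := sSup ((fun s => ‖y s‖) '' Set.Icc 0 t1) with hC2def
  have hC2ne : ((fun s => ‖y s‖) '' Set.Icc (0:ℝ) t1).Nonempty :=
    (Set.nonempty_Icc.mpr ht10).image _
  have hC2bdd : BddAbove ((fun s => ‖y s‖) '' Set.Icc (0:ℝ) t1) :=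
    (isCompact_Icc.image_of_continuousOn hnc.continuousOn).bddAbove
  have hC2ub : ∀ s ∈ Set.Icc (0:ℝ) t1, ‖y s‖ ≤ C2 :=
    fun s hs => le_csSup hC2bdd ⟨s, hs, rfl⟩
  have hC20 : 0 ≤ C2 := le_trans (norm_nonneg _) (hC2ub 0 ⟨le_refl _, ht10⟩)
  refine ⟨max (M 0) C2 * Real.exp (α * t1), ?_⟩
  intro t ht
  show ‖y t‖ ≤ max (M 0) C2 * Real.exp (α * t1) * Real.exp (-α * t)
  have hmax0 : 0 ≤ max (M 0) C2 := le_trans (hM0 0) (le_max_left _ _)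
  rcases le_or_gt t t1 with hcase | hcase
  · have h1 : ‖y t‖ ≤ C2 := hC2ub t ⟨ht, hcase⟩
    have h2 : (1:ℝ) ≤ Real.exp (α * t1) * Real.exp (-α * t) := by
      rw [← Real.exp_add]
      apply Real.one_le_exp
      nlinarith [hα0]
    calc ‖y t‖ ≤ C2 := h1
      _ = C2 * 1 := by ring
      _ ≤ max (M 0) C2 * (Real.exp (α * t1) * Real.exp (-α * t)) :=
          mul_le_mul (le_max_right _ _) h2 (by norm_num) hmax0
      _ = max (M 0) C2 * Real.exp (α * t1) * Real.exp (-α * t) := by ring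
  · set k : ℕ := ⌊(t - t1)/r⌋₊ with hkdef
    have hfr0 : 0 ≤ (t - t1)/r := div_nonneg (by linarith) (le_of_lt hr0)
    have hk1 : (k : ℝ) ≤ (t - t1)/r := Nat.floor_le hfr0
    have hk2 : (t - t1)/r < (k : ℝ) + 1 := Nat.lt_floor_add_one _
    have hk1' : (k : ℝ) * r ≤ t - t1 := by
      rw [le_div_iff₀ hr0] at hk1
      linarith
    have hk2' : t - t1 < ((k : ℝ) + 1) * r := by
      rw [div_lt_iff₀ hr0] at hk2
      linarith
    have htmem : t ∈ Set.Icc (t1 + ((k+1 : ℕ) : ℝ)*r - r) (t1 + ((k+1 : ℕ) : ℝ)*r) := by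
      constructor
      · push_cast
        linarith [hk1']
      · push_cast
        linarith [hk2']
    have h1 : ‖y t‖ ≤ M (k+1) := hMub (k+1) t htmem
    have hqe : Real.exp (((k+1 : ℕ) : ℝ) * Real.log q) = q^(k+1) := by
      rw [Real.exp_nat_mul, Real.exp_log hq0]
    have hlogq : Real.log q < 0 := Real.log_neg hq0 hq1
    have hmul : ((k:ℝ)+1) * Real.log q ≤ ((t-t1)/r) * Real.log q :=
      mul_le_mul_of_nonpos_right (le_of_lt hk2) (le_of_lt hlogq)
    have heqv : ((t-t1)/r) * Real.log q = α * t1 + -α * t := by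
      rw [hαdef]
      field_simp
      ring
    have h3 : q^(k+1) ≤ Real.exp (α*t1) * Real.exp (-α*t) := by
      rw [← hqe, ← Real.exp_add]
      apply Real.exp_le_exp.mpr
      push_cast
      linarith [hmul, heqv.le, heqv.ge]
    calc ‖y t‖ ≤ M (k+1) := h1
      _ ≤ q^(k+1) * M 0 := hMk (k+1)
      _ ≤ (Real.exp (α*t1) * Real.exp (-α*t)) * M 0 :=
          mul_le_mul_of_nonneg_right h3 (hM0 0)
      _ ≤ (Real.exp (α*t1) * Real.exp (-α*t)) * max (M 0) C2 := by
          apply mul_le_mul_of_nonneg_left (le_max_left _ _)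
          positivity
      _ = max (M 0) C2 * Real.exp (α * t1) * Real.exp (-α * t) := by ring
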